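/- Let b₁,b₂,b₃,b₄ be real numbers with b₁ > 0, b₃ > 0, 4b₄b₂ − b₃² > 0, and 3b₁b₃ − b₂² > 0. Then 27b₁²b₄² − 18b₁b₂b₃b₄ + 4b₁b₃³ + 4b₂³b₄ − b₂²b₃² ≥ 0; indeed, viewed as a quadratic in b₄ it has discriminant −16(3b₁b₃ − b₂²)³ < 0 and positive leading coefficient, so it is strictly positive. Consequently the 4×4 symmetric matrix B = [[b₁,b₂,b₃,b₄],[b₂,3b₃,9b₄,(4b₄b₂−b₃²)/b₁],[b₃,9b₄,3(4b₄b₂−b₃²)/b₁,−(2b₁b₃b₄−4b₂²b₄+b₂b₃²)/b₁²],[b₄,(4b₄b₂−b₃²)/b₁,−(2b₁b₃b₄−4b₂²b₄+b₂b₃²)/b₁²,−(8b₁b₄²−4b₂b₃b₄+b₃³)/b₁²]] is not positive definite. -/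

import Mathlib

/-- The key algebraic lemma in the proof that `L₇,₆` admits no closed G₂-structure.
If `b₁ > 0`, `b₃ > 0`, `4b₄b₂ − b₃² > 0` and `3b₁b₃ − b₂² > 0`, then the quantity
`27b₁²b₄² − 18b₁b₂b₃b₄ + 4b₁b₃³ + 4b₂³b₄ − b₂²b₃²` is strictly positive (as a quadratic
in `b₄` it has negative discriminant `−16(3b₁b₃ − b₂²)³` and positive leading
coefficient), and consequently the displayed 4×4 symmetric matrix `B` is not positive
definite. -/
theorem L76_key_matrix_not_posDef (b₁ b₂ b₃ b₄ : ℝ)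
    (h1 : 0 < b₁) (h3 : 0 < b₃) (h43 : 0 < 4 * b₄ * b₂ - b₃ ^ 2)
    (h22 : 0 < 3 * b₁ * b₃ - b₂ ^ 2) :
    0 < 27 * b₁ ^ 2 * b₄ ^ 2 - 18 * b₁ * b₂ * b₃ * b₄ + 4 * b₁ * b₃ ^ 3
        + 4 * b₂ ^ 3 * b₄ - b₂ ^ 2 * b₃ ^ 2 ∧
    ¬ (!![b₁, b₂, b₃, b₄;
          b₂, 3 * b₃, 9 * b₄, (4 * b₄ * b₂ - b₃ ^ 2) / b₁;
          b₃, 9 * b₄, 3 * ((4 * b₄ * b₂ - b₃ ^ 2) / b₁),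
            -((2 * b₁ * b₃ * b₄ - 4 * b₂ ^ 2 * b₄ + b₂ * b₃ ^ 2) / b₁ ^ 2);
          b₄, (4 * b₄ * b₂ - b₃ ^ 2) / b₁,
            -((2 * b₁ * b₃ * b₄ - 4 * b₂ ^ 2 * b₄ + b₂ * b₃ ^ 2) / b₁ ^ 2),
            -((8 * b₁ * b₄ ^ 2 - 4 * b₂ * b₃ * b₄ + b₃ ^ 3) / b₁ ^ 2)] :
        Matrix (Fin 4) (Fin 4) ℝ).PosDef := by
  have hP : 0 < 27 * b₁ ^ 2 * b₄ ^ 2 - 18 * b₁ * b₂ * b₃ * b₄ + 4 * b₁ * b₃ ^ 3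
      + 4 * b₂ ^ 3 * b₄ - b₂ ^ 2 * b₃ ^ 2 := by
    nlinarith [sq_nonneg (54 * b₁ ^ 2 * b₄ - 18 * b₁ * b₂ * b₃ + 4 * b₂ ^ 3),
      pow_pos h22 3, sq_nonneg b₁, mul_pos h1 h1]
  refine ⟨hP, fun hPD => ?_⟩
  set v : Fin 4 → ℝ := ![9 * b₂ * b₄ - 3 * b₃ ^ 2, b₂ * b₃ - 9 * b₁ * b₄,
      3 * b₁ * b₃ - b₂ ^ 2, 0] with hv
  have hvne : v ≠ 0 := by
    intro h
    have := congrFun h 2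
    simp [hv] at this
    nlinarith
  have hpos := hPD.dotProduct_mulVec_pos hvne
  simp only [hv, dotProduct, Matrix.mulVec, Fin.sum_univ_four, Matrix.cons_val',
    Matrix.cons_val_zero, Matrix.cons_val_one, Matrix.head_cons, Matrix.cons_val_fin_one,
    Matrix.empty_val', Matrix.head_fin_const, Matrix.cons_val_two, Matrix.tail_cons,
    Matrix.cons_val_three, Matrix.of_apply, Pi.star_apply, star_trivial] at hpos
  have hb1 : b₁ ≠ 0 := ne_of_gt h1
  have key : b₁ * ((9 * b₂ * b₄ - 3 * b₃ ^ 2) *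
            (b₁ * (9 * b₂ * b₄ - 3 * b₃ ^ 2) + b₂ * (b₂ * b₃ - 9 * b₁ * b₄) + b₃ * (3 * b₁ * b₃ - b₂ ^ 2) + b₄ * 0) +
          (b₂ * b₃ - 9 * b₁ * b₄) *
            (b₂ * (9 * b₂ * b₄ - 3 * b₃ ^ 2) + 3 * b₃ * (b₂ * b₃ - 9 * b₁ * b₄) + 9 * b₄ * (3 * b₁ * b₃ - b₂ ^ 2) +
              (4 * b₄ * b₂ - b₃ ^ 2) / b₁ * 0) +
        (3 * b₁ * b₃ - b₂ ^ 2) *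
          (b₃ * (9 * b₂ * b₄ - 3 * b₃ ^ 2) + 9 * b₄ * (b₂ * b₃ - 9 * b₁ * b₄) +
              3 * ((4 * b₄ * b₂ - b₃ ^ 2) / b₁) * (3 * b₁ * b₃ - b₂ ^ 2) +
            -((2 * b₁ * b₃ * b₄ - 4 * b₂ ^ 2 * b₄ + b₂ * b₃ ^ 2) / b₁ ^ 2) * 0) +
      0 *
        (b₄ * (9 * b₂ * b₄ - 3 * b₃ ^ 2) + (4 * b₄ * b₂ - b₃ ^ 2) / b₁ * (b₂ * b₃ - 9 * b₁ * b₄) +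
            -((2 * b₁ * b₃ * b₄ - 4 * b₂ ^ 2 * b₄ + b₂ * b₃ ^ 2) / b₁ ^ 2) * (3 * b₁ * b₃ - b₂ ^ 2) +
          -((8 * b₁ * b₄ ^ 2 - 4 * b₂ * b₃ * b₄ + b₃ ^ 3) / b₁ ^ 2) * 0))
      = -(3 * ((3 * b₁ * b₃ - b₂ ^ 2) * (27 * b₁ ^ 2 * b₄ ^ 2 - 18 * b₁ * b₂ * b₃ * b₄
          + 4 * b₁ * b₃ ^ 3 + 4 * b₂ ^ 3 * b₄ - b₂ ^ 2 * b₃ ^ 2))) := by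
    field_simp
    ring
  nlinarith [mul_pos h1 hpos, key, mul_pos h22 hP]
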